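/- Let S be an inverse semigroup with zero, s ∈ S, e an idempotent of S, and Z a finite set of idempotents of S. If Z is a cover of e in E(S), then {s⁻¹·z·s : z ∈ Z} is a cover of s⁻¹·e·s in E(S). (Example 3.10: the family of covers is S-invariant.) -/
import Mathlib


/-- An inverse semigroup with zero: a semigroup with an absorbing element `0` and an
inverse operation satisfying `s * s⁻¹ * s = s` and `s⁻¹ * s * s⁻¹ = s⁻¹`, in which any two
idempotents commute. -/
class InverseSemigroupWithZero (S : Type*) extends Semigroup S, Zero S, Inv S where
  zero_mul : ∀ s : S, 0 * s = 0
  mul_zero : ∀ s : S, s * 0 = 0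
  mul_inv_mul : ∀ s : S, s * s⁻¹ * s = s
  inv_mul_inv : ∀ s : S, s⁻¹ * s * s⁻¹ = s⁻¹
  idem_comm : ∀ e f : S, e * e = e → f * f = f → e * f = f * e

/-- Example 3.10.  If a finite set `Z` of idempotents covers the
idempotent `e`, then `{s⁻¹·z·s : z ∈ Z}` covers `s⁻¹·e·s`. -/
theorem statement10 {S : Type*} [InverseSemigroupWithZero S]
    (s e : S) (he : e * e = e)
    (Z : Finset S) (hZ : ∀ z ∈ Z, z * z = z)
    (hcover : ∀ f : S, f * f = f → f = f * e → f ≠ 0 → ∃ z ∈ Z, f * z ≠ 0) :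
    ∀ f : S, f * f = f → f = f * (s⁻¹ * e * s) → f ≠ 0 →
      ∃ z ∈ Z, f * (s⁻¹ * z * s) ≠ 0 := by
  intro f hf hfe hf0
  have comm := InverseSemigroupWithZero.idem_comm (S := S)
  have ha : ∀ t : S, t * (t⁻¹ * t) = t := fun t => by
    rw [← mul_assoc]; exact InverseSemigroupWithZero.mul_inv_mul t
  have hb : ∀ t : S, t⁻¹ * (t * t⁻¹) = t⁻¹ := fun t => by
    rw [← mul_assoc]; exact InverseSemigroupWithZero.inv_mul_inv t
  have hfe' : f = f * (s⁻¹ * (e * s)) := by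
    simpa only [mul_assoc] using hfe
  have hi1 : (s⁻¹ * s) * (s⁻¹ * s) = s⁻¹ * s := by
    simp only [mul_assoc]; rw [ha s]
  have hi2 : (s * s⁻¹) * (s * s⁻¹) = s * s⁻¹ := by
    simp only [mul_assoc]; rw [hb s]
  have hfs : f * (s⁻¹ * s) = f := by
    conv_lhs => rw [hfe']
    calc f * (s⁻¹ * (e * s)) * (s⁻¹ * s)
        = f * (s⁻¹ * (e * (s * (s⁻¹ * s)))) := by simp only [mul_assoc]
      _ = f * (s⁻¹ * (e * s)) := by rw [ha s]
      _ = f := hfe'.symm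
  have hcomm1 : (s⁻¹ * s) * f = f := by
    rw [comm _ _ hi1 hf, hfs]
  set g := s * (f * s⁻¹) with hgdef
  have hgg : g * g = g := by
    calc g * g = s * (f * (((s⁻¹ * s) * f) * s⁻¹)) := by simp only [hgdef, mul_assoc]
      _ = s * ((f * f) * s⁻¹) := by rw [hcomm1]; simp only [mul_assoc]
      _ = g := by rw [hf, hgdef]
  have hge : g = g * e := by
    calc g = s * ((f * (s⁻¹ * (e * s))) * s⁻¹) := by rw [← hfe']
      _ = s * (f * (s⁻¹ * (e * (s * s⁻¹)))) := by simp only [mul_assoc]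
      _ = s * (f * (s⁻¹ * ((s * s⁻¹) * e))) := by rw [comm e (s * s⁻¹) he hi2]
      _ = s * (f * ((s⁻¹ * (s * s⁻¹)) * e)) := by simp only [mul_assoc]
      _ = s * (f * (s⁻¹ * e)) := by rw [hb s]
      _ = g * e := by simp only [hgdef, mul_assoc]
  have hkey : s⁻¹ * (g * s) = f := by
    calc s⁻¹ * (g * s) = (s⁻¹ * s) * (f * (s⁻¹ * s)) := by simp only [hgdef, mul_assoc]
      _ = (s⁻¹ * s) * f := by rw [hfs]
      _ = f := hcomm1
  have hg0 : g ≠ 0 := by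
    intro h
    apply hf0
    rw [← hkey, h, InverseSemigroupWithZero.zero_mul, InverseSemigroupWithZero.mul_zero]
  obtain ⟨z, hzZ, hgz⟩ := hcover g hgg hge hg0
  refine ⟨z, hzZ, fun h0 => hgz ?_⟩
  have hz := hZ z hzZ
  have : g * z = s * ((f * (s⁻¹ * z * s)) * s⁻¹) := by
    calc g * z = s * (f * (s⁻¹ * z)) := by simp only [hgdef, mul_assoc]
      _ = s * (f * ((s⁻¹ * (s * s⁻¹)) * z)) := by rw [hb s]
      _ = s * (f * (s⁻¹ * ((s * s⁻¹) * z))) := by simp only [mul_assoc]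
      _ = s * (f * (s⁻¹ * (z * (s * s⁻¹)))) := by rw [comm _ _ hi2 hz]
      _ = s * ((f * (s⁻¹ * z * s)) * s⁻¹) := by simp only [mul_assoc]
  rw [this, h0, InverseSemigroupWithZero.zero_mul, InverseSemigroupWithZero.mul_zero]
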